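/- Let K be a field, n ≥ 1 an integer, and K' = K(X_0, …, X_{n−1}) the field of fractions of the polynomial ring in n indeterminates over K. Then the generic monic polynomial p = T^n + X_{n−1}T^{n−1} + … + X_1 T + X_0 ∈ K'[T] is separable, and its Galois group Gal(p) (the Galois group of its splitting field over K') has cardinality n!, i.e., it is the full symmetric group on the n roots. -/

import Mathlib

noncomputable section

namespace Stmt8

open Polynomial

variable (K : Type*) [Field K] (n : ℕ)

abbrev A := MvPolynomial (Fin n) K
/-- A copy of the fraction field of `A K n`, as a distinct type to control instances. -/
def L := FractionRing (A K n)

instance : Field (L K n) := inferInstanceAs (Field (FractionRing (A K n)))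
instance : Algebra (A K n) (L K n) :=
  inferInstanceAs (Algebra (A K n) (FractionRing (A K n)))
instance : IsFractionRing (A K n) (L K n) :=
  inferInstanceAs (IsFractionRing (A K n) (FractionRing (A K n)))
instance : Algebra K (L K n) := inferInstanceAs (Algebra K (FractionRing (A K n)))
instance : IsScalarTower K (A K n) (L K n) :=
  inferInstanceAs (IsScalarTower K (A K n) (FractionRing (A K n)))

def q : Polynomial (A K n) := ∏ i : Fin n, (X - C (MvPolynomial.X i))

lemma q_monic : (q K n).Monic :=
  monic_prod_of_monic _ _ fun i _ => monic_X_sub_C _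

lemma q_natDegree : (q K n).natDegree = n := by
  rw [q, Polynomial.natDegree_prod]
  · simp
  · intro i _
    exact X_sub_C_ne_zero _

lemma q_coeff {k : ℕ} (h : k ≤ n) :
    (q K n).coeff k = (-1) ^ (n - k) * MvPolynomial.esymm (Fin n) K (n - k) := by
  have hq : q K n =
      ((Finset.univ.val.map fun i : Fin n => (MvPolynomial.X i : A K n)).map
        fun t => X - C t).prod := by
    rw [Multiset.map_map, q, Finset.prod_eq_multiset_prod]
    rfl
  have hcard : Multiset.card (Finset.univ.val.map
      fun i : Fin n => (MvPolynomial.X i : A K n)) = n := by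
    simp
  rw [hq, Multiset.prod_X_sub_C_coeff _ (by rw [hcard]; exact h), hcard,
    MvPolynomial.esymm_eq_multiset_esymm]

lemma q_eq : q K n = X ^ n + ∑ i : Fin n, C ((q K n).coeff i) * X ^ (i : ℕ) := by
  have h1 : (q K n).natDegree < n + 1 := by rw [q_natDegree]; omega
  have htop : (q K n).coeff n = 1 := by
    have := (q_monic K n).coeff_natDegree
    rwa [q_natDegree] at this
  conv_lhs => rw [(q K n).as_sum_range' (n + 1) h1]
  rw [Finset.sum_range_succ, htop, ← Polynomial.X_pow_eq_monomial, add_comm]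
  congr 1
  simp_rw [← Polynomial.C_mul_X_pow_eq_monomial]
  exact (Fin.sum_univ_eq_sum_range (fun i => C ((q K n).coeff i) * X ^ i) n).symm

def ψ₀ : A K n →ₐ[K] A K n := MvPolynomial.aeval fun i : Fin n => (q K n).coeff i

def u : A K n →ₐ[K] A K n :=
  MvPolynomial.aeval fun i : Fin n => (-1 : A K n) ^ (n - (i : ℕ)) * MvPolynomial.X (Fin.rev i)

def v : A K n →ₐ[K] A K n :=
  MvPolynomial.aeval fun j : Fin n => (-1 : A K n) ^ ((j : ℕ) + 1) * MvPolynomial.X (Fin.rev j)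

lemma rev_val (i : Fin n) : (Fin.rev i : ℕ) + 1 = n - (i : ℕ) := by
  have := i.isLt
  simp only [Fin.val_rev]
  omega

lemma v_comp_u : (v K n).comp (u K n) = AlgHom.id K (A K n) := by
  apply MvPolynomial.algHom_ext
  intro i
  have hi := i.isLt
  simp only [AlgHom.comp_apply, u, v, MvPolynomial.aeval_X, map_mul, map_pow, map_neg, map_one,
    AlgHom.id_apply, Fin.rev_rev]
  rw [rev_val, ← mul_assoc, ← pow_add]
  have : (-1 : A K n) ^ ((n - (i:ℕ)) + (n - (i:ℕ))) = 1 := by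
    rw [← two_mul, pow_mul]
    simp
  rw [this, one_mul]

lemma u_comp_v : (u K n).comp (v K n) = AlgHom.id K (A K n) := by
  apply MvPolynomial.algHom_ext
  intro j
  have hj := j.isLt
  simp only [AlgHom.comp_apply, u, v, MvPolynomial.aeval_X, map_mul, map_pow, map_neg, map_one,
    AlgHom.id_apply, Fin.rev_rev]
  have h : n - (Fin.rev j : ℕ) = (j : ℕ) + 1 := by
    simp only [Fin.val_rev]
    omega
  rw [h, ← mul_assoc, ← pow_add]
  have : (-1 : A K n) ^ (((j:ℕ)+1) + ((j:ℕ)+1)) = 1 := by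
    rw [← two_mul, pow_mul]
    simp
  rw [this, one_mul]

lemma ψ₀_eq : ψ₀ K n =
    ((MvPolynomial.symmetricSubalgebra (Fin n) K).val.comp
      (MvPolynomial.esymmAlgHom (Fin n) K n)).comp (u K n) := by
  apply MvPolynomial.algHom_ext
  intro i
  have hi := i.isLt
  simp only [ψ₀, AlgHom.comp_apply, MvPolynomial.aeval_X, u, map_mul, map_pow, map_neg, map_one,
    Subalgebra.coe_val]
  rw [q_coeff K n (le_of_lt hi)]
  rw [MvPolynomial.esymmAlgHom_apply, MvPolynomial.aeval_X, rev_val]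

lemma ψ₀_injective : Function.Injective (ψ₀ K n) := by
  intro a b hab
  rw [ψ₀_eq] at hab
  simp only [AlgHom.comp_apply, Subalgebra.coe_val] at hab
  have h2 : (MvPolynomial.esymmAlgHom (Fin n) K n) ((u K n) a) =
      (MvPolynomial.esymmAlgHom (Fin n) K n) ((u K n) b) := Subtype.ext hab
  have h3 : (u K n) a = (u K n) b :=
    MvPolynomial.esymmAlgHom_injective K (le_of_eq (Fintype.card_fin n).symm) h2
  have h4 := congrArg (v K n) h3
  have h5 := congrArg (fun f : A K n →ₐ[K] A K n => f a) (v_comp_u K n)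
  have h6 := congrArg (fun f : A K n →ₐ[K] A K n => f b) (v_comp_u K n)
  simp only [AlgHom.comp_apply, AlgHom.id_apply] at h5 h6
  rw [← h5, ← h6]
  exact h4

lemma ψ₀_symmetric (a : A K n) : (ψ₀ K n a).IsSymmetric := by
  rw [ψ₀_eq]
  exact ((MvPolynomial.esymmAlgHom (Fin n) K n) ((u K n) a)).2

lemma exists_preimage_of_symmetric (a : A K n) (ha : a.IsSymmetric) :
    ∃ b, ψ₀ K n b = a := by
  obtain ⟨c, hc⟩ := MvPolynomial.esymmAlgHom_surjective K
    (le_of_eq (Fintype.card_fin n)) (⟨a, ha⟩ : MvPolynomial.symmetricSubalgebra (Fin n) K)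
  refine ⟨v K n c, ?_⟩
  rw [ψ₀_eq]
  simp only [AlgHom.comp_apply]
  have huv : (u K n) ((v K n) c) = c := by
    have := congrArg (fun f : A K n →ₐ[K] A K n => f c) (u_comp_v K n)
    simpa using this
  rw [huv, hc]
  rfl

def g : A K n →+* L K n := (algebraMap (A K n) (L K n)).comp (ψ₀ K n).toRingHom

lemma g_injective : Function.Injective (g K n) :=
  (IsFractionRing.injective (A K n) (L K n)).comp (ψ₀_injective K n)

def φ : FractionRing (A K n) →+* L K n := IsFractionRing.lift (g_injective K n)

lemma φ_algebraMap (a : A K n) :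
    φ K n (algebraMap (A K n) (FractionRing (A K n)) a) = g K n a :=
  IsFractionRing.lift_algebraMap _ _

def renameHom : Equiv.Perm (Fin n) →* ((A K n) ≃ₐ[K] (A K n)) where
  toFun := fun σ => MvPolynomial.renameEquiv K σ
  map_one' := by ext1 x; simp
  map_mul' := by intro σ τ; ext1 x; simp [MvPolynomial.rename_rename]

def actHom : Equiv.Perm (Fin n) →* ((L K n) ≃ₐ[K] (L K n)) :=
  (IsFractionRing.fieldEquivOfAlgEquivHom K (L K n)).comp (renameHom K n)

lemma actHom_injective : Function.Injective (actHom K n) := by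
  intro σ τ h
  have h2 : renameHom K n σ = renameHom K n τ :=
    IsFractionRing.fieldEquivOfAlgEquivHom_injective K (A K n) K (L K n) h
  ext i
  have h3 := congrArg (fun f : (A K n) ≃ₐ[K] (A K n) => f (MvPolynomial.X i)) h2
  simp only [renameHom, MonoidHom.coe_mk, OneHom.coe_mk, MvPolynomial.renameEquiv_apply,
    MvPolynomial.rename_X] at h3
  exact congrArg Fin.val (MvPolynomial.X_injective h3)

lemma actHom_algebraMap (σ : Equiv.Perm (Fin n)) (a : A K n) :
    actHom K n σ (algebraMap (A K n) (L K n) a) =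
      algebraMap (A K n) (L K n) (MvPolynomial.rename σ a) := by
  simp [actHom, renameHom]


end Stmt8

end

set_option maxHeartbeats 1000000 in
set_option synthInstance.maxHeartbeats 200000 in
open Polynomial in
/-- Over `K' = K(X_0, …, X_{n-1})`, the generic monic polynomial
`p = T^n + X_{n-1} T^{n-1} + … + X_1 T + X_0` is separable, and its Galois group
(the Galois group of its splitting field over `K'`) has cardinality `n!`. -/
theorem stmt_8 (K : Type*) [Field K] (n : ℕ) (hn : 1 ≤ n) :
    let K' := FractionRing (MvPolynomial (Fin n) K)
    let p : Polynomial K' := Polynomial.X ^ n +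
      ∑ i : Fin n, Polynomial.C
        (algebraMap (MvPolynomial (Fin n) K) K' (MvPolynomial.X i)) *
          Polynomial.X ^ (i : ℕ)
    p.Separable ∧ Nat.card p.Gal = Nat.factorial n := by
  intro K' p
  classical
  letI : Algebra K' (Stmt8.L K n) := (Stmt8.φ K n).toAlgebra
  have halg : algebraMap K' (Stmt8.L K n) = Stmt8.φ K n := rfl
  set aM : Stmt8.A K n →+* Stmt8.L K n := algebraMap (Stmt8.A K n) (Stmt8.L K n) with haM
  have hp_def : p = X ^ n +
      ∑ i : Fin n, C (algebraMap (Stmt8.A K n) K' (MvPolynomial.X i)) * X ^ (i : ℕ) := rfl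
  -- p maps to q
  have hcoe : ∀ a : Stmt8.A K n,
      algebraMap K' (Stmt8.L K n) (algebraMap (Stmt8.A K n) K' a) = aM (Stmt8.ψ₀ K n a) := by
    intro a
    rw [halg, Stmt8.φ_algebraMap]
    rfl
  have pm : p.map (algebraMap K' (Stmt8.L K n)) = (Stmt8.q K n).map aM := by
    rw [hp_def]
    conv_rhs => rw [Stmt8.q_eq]
    simp only [Polynomial.map_add, Polynomial.map_pow, Polynomial.map_X, Polynomial.map_sum,
      Polynomial.map_mul, Polynomial.map_C]
    congr 1
    refine Finset.sum_congr rfl fun i _ => ?_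
    congr 2
    rw [hcoe]
    congr 1
    simp [Stmt8.ψ₀]
  have pm' : p.map (algebraMap K' (Stmt8.L K n)) =
      ∏ i : Fin n, (X - C (aM (MvPolynomial.X i))) := by
    rw [pm, Stmt8.q, Polynomial.map_prod]
    simp
  -- separability
  have hsep : p.Separable := by
    rw [← Polynomial.separable_map (algebraMap K' (Stmt8.L K n)), pm',
      Polynomial.separable_prod_X_sub_C_iff]
    intro i j hij
    exact MvPolynomial.X_injective (IsFractionRing.injective (Stmt8.A K n) (Stmt8.L K n) hij)
  refine ⟨hsep, ?_⟩

  -- p is nonzero, roots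
  have hp0 : p ≠ 0 := by
    intro h
    have h2 : (∏ i : Fin n, (X - C (aM (MvPolynomial.X i)))) ≠ 0 :=
      (monic_prod_of_monic _ _ fun i _ => monic_X_sub_C _).ne_zero
    apply h2
    rw [← pm', h, Polynomial.map_zero]
  have hroot : ∀ i : Fin n, aM (MvPolynomial.X i) ∈ p.rootSet (Stmt8.L K n) := by
    intro i
    rw [Polynomial.mem_rootSet']
    constructor
    · rw [pm']
      exact (monic_prod_of_monic _ _ fun i _ => monic_X_sub_C _).ne_zero
    rw [Polynomial.aeval_def, Polynomial.eval₂_eq_eval_map, pm', Polynomial.eval_prod]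
    exact Finset.prod_eq_zero (Finset.mem_univ i) (by simp)
  -- the symmetric group action
  letI act : MulSemiringAction (Equiv.Perm (Fin n)) (Stmt8.L K n) :=
    MulSemiringAction.compHom _ (Stmt8.actHom K n)
  have hsmul : ∀ (σ : Equiv.Perm (Fin n)) (x : Stmt8.L K n),
      σ • x = Stmt8.actHom K n σ x := fun _ _ => rfl
  haveI hfaith : FaithfulSMul (Equiv.Perm (Fin n)) (Stmt8.L K n) := by
    constructor
    intro σ τ h
    apply Stmt8.actHom_injective K n
    apply AlgEquiv.ext
    intro x
    rw [← hsmul, ← hsmul]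
    exact h x
  have smul_aM : ∀ (σ : Equiv.Perm (Fin n)) (a : Stmt8.A K n),
      σ • (aM a) = aM (MvPolynomial.rename σ a) := by
    intro σ a
    rw [hsmul]
    exact Stmt8.actHom_algebraMap K n σ a
  set F₀ := FixedPoints.subfield (Equiv.Perm (Fin n)) (Stmt8.L K n) with hF₀
  -- range of φ is contained in the fixed field
  have hsub : ∀ y : K', Stmt8.φ K n y ∈ F₀ := by
    intro y
    obtain ⟨a, b, -, rfl⟩ := IsFractionRing.div_surjective (A := Stmt8.A K n) y
    intro σ
    have h1 : Stmt8.φ K n (algebraMap (Stmt8.A K n) K' a / algebraMap (Stmt8.A K n) K' b) =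
        aM (Stmt8.ψ₀ K n a) / aM (Stmt8.ψ₀ K n b) := by
      rw [map_div₀, Stmt8.φ_algebraMap, Stmt8.φ_algebraMap]
      rfl
    rw [h1]
    have h2 : σ • (aM (Stmt8.ψ₀ K n a) / aM (Stmt8.ψ₀ K n b)) =
        (σ • aM (Stmt8.ψ₀ K n a)) / (σ • aM (Stmt8.ψ₀ K n b)) := by
      rw [hsmul, hsmul, hsmul, map_div₀]
    rw [h2, smul_aM, smul_aM, Stmt8.ψ₀_symmetric K n a σ, Stmt8.ψ₀_symmetric K n b σ]
  -- the fixed field is contained in the range of φ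
  have hsup : ∀ x : Stmt8.L K n, x ∈ F₀ → ∃ y : K', Stmt8.φ K n y = x := by
    intro x hx
    obtain ⟨a, b, hb, rfl⟩ := IsFractionRing.div_surjective (A := Stmt8.A K n) x
    have hb0 : b ≠ 0 := nonZeroDivisors.ne_zero hb
    set B : Stmt8.A K n := ∏ σ : Equiv.Perm (Fin n), MvPolynomial.rename σ b with hB
    set m : Stmt8.A K n :=
      a * ∏ σ ∈ Finset.univ.erase (1 : Equiv.Perm (Fin n)), MvPolynomial.rename σ b with hm
    have hrename1 : MvPolynomial.rename (1 : Equiv.Perm (Fin n)) b = b := by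
      have : ((1 : Equiv.Perm (Fin n)) : Fin n → Fin n) = id := rfl
      rw [this, MvPolynomial.rename_id, AlgHom.id_apply]
    have hbB : b * (∏ σ ∈ Finset.univ.erase (1 : Equiv.Perm (Fin n)),
        MvPolynomial.rename σ b) = B := by
      rw [hB, ← Finset.mul_prod_erase Finset.univ _ (Finset.mem_univ 1), hrename1]
    have hB0 : B ≠ 0 := by
      rw [hB]
      apply Finset.prod_ne_zero_iff.mpr
      intro σ _
      intro h
      exact hb0 (by
        have := congrArg (MvPolynomial.rename σ.symm) h
        rwa [MvPolynomial.rename_rename, map_zero, show (σ.symm : Fin n → Fin n) ∘ σ = id by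
          funext i; simp, MvPolynomial.rename_id] at this)
    have hBsym : B.IsSymmetric := by
      intro τ
      rw [hB, map_prod]
      simp_rw [MvPolynomial.rename_rename]
      exact Equiv.prod_comp (Equiv.mulLeft τ) (fun σ => MvPolynomial.rename σ b)
    have haMb : aM b ≠ 0 := fun h => hb0 ((IsFractionRing.to_map_eq_zero_iff (K := Stmt8.L K n)).mp h)
    have haMB : aM B ≠ 0 := fun h => hB0 ((IsFractionRing.to_map_eq_zero_iff (K := Stmt8.L K n)).mp h)
    have hxB : aM a / aM b * aM B = aM m := by
      rw [div_mul_eq_mul_div, div_eq_iff haMb, ← map_mul, ← map_mul]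
      congr 1
      rw [hm, ← hbB]
      ring
    have hmfix : ∀ σ : Equiv.Perm (Fin n), MvPolynomial.rename σ m = m := by
      intro σ
      have h1 : σ • (aM a / aM b * aM B) = aM a / aM b * aM B := by
        have h2 : σ • (aM a / aM b) = aM a / aM b := hx σ
        have h3 : σ • (aM B) = aM B := by rw [smul_aM, hBsym σ]
        rw [smul_mul', h2, h3]
      rw [hxB, smul_aM] at h1
      exact IsFractionRing.injective (Stmt8.A K n) (Stmt8.L K n) h1
    obtain ⟨m', hm'⟩ := Stmt8.exists_preimage_of_symmetric K n m hmfix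
    obtain ⟨B', hB'⟩ := Stmt8.exists_preimage_of_symmetric K n B hBsym
    refine ⟨algebraMap (Stmt8.A K n) K' m' / algebraMap (Stmt8.A K n) K' B', ?_⟩
    rw [map_div₀, Stmt8.φ_algebraMap, Stmt8.φ_algebraMap]
    show aM (Stmt8.ψ₀ K n m') / aM (Stmt8.ψ₀ K n B') = _
    rw [hm', hB', eq_comm, eq_div_iff haMB]
    exact hxB

  -- K' is isomorphic to the fixed field
  let φ' : K' →+* F₀ := (Stmt8.φ K n).codRestrict F₀.toSubring hsub
  have hφ'bij : Function.Bijective φ' := by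
    constructor
    · intro x y hxy
      apply (Stmt8.φ K n).injective
      exact congrArg Subtype.val hxy
    · rintro ⟨x, hx⟩
      obtain ⟨y, hy⟩ := hsup x hx
      exact ⟨y, Subtype.ext hy⟩
  let e : K' ≃+* F₀ := RingEquiv.ofBijective φ' hφ'bij
  have hrank : Module.rank K' (Stmt8.L K n) = Module.rank F₀ (Stmt8.L K n) :=
    Algebra.rank_eq_of_equiv_equiv e (RingEquiv.refl (Stmt8.L K n)) (by ext x; rfl)
  have hfr0 : Module.finrank F₀ (Stmt8.L K n) = Nat.factorial n := by
    rw [FixedPoints.finrank_eq_card (Equiv.Perm (Fin n)) (Stmt8.L K n),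
      Fintype.card_perm, Fintype.card_fin]
  have hfr : Module.finrank K' (Stmt8.L K n) = Nat.factorial n := by
    rw [← hfr0]
    simp only [Module.finrank]
    rw [hrank]
  -- L is a splitting field of p over K'
  haveI hsf : Polynomial.IsSplittingField K' (Stmt8.L K n) p := by
    rw [isSplittingField_iff_intermediateField]
    constructor
    · rw [pm']
      exact Polynomial.Splits.prod fun i _ => Polynomial.Splits.X_sub_C _
    · rw [eq_top_iff]
      have hcl : Subfield.closure (Set.range aM) = ⊤ :=
        IsFractionRing.closure_range_algebraMap (Stmt8.A K n) (Stmt8.L K n)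
      intro x _
      have hx : x ∈ Subfield.closure (Set.range aM) := by rw [hcl]; trivial
      have hle : Subfield.closure (Set.range aM) ≤
          (IntermediateField.adjoin K' (p.rootSet (Stmt8.L K n))).toSubfield := by
        rw [Subfield.closure_le]
        rintro _ ⟨a, rfl⟩
        show aM a ∈ IntermediateField.adjoin K' (p.rootSet (Stmt8.L K n))
        induction a using MvPolynomial.induction_on with
        | C c =>
          have hcc : aM (MvPolynomial.C c) =
              algebraMap K' (Stmt8.L K n) (algebraMap (Stmt8.A K n) K' (MvPolynomial.C c)) := by
            rw [hcoe]
            congr 1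
            simp [Stmt8.ψ₀, MvPolynomial.algebraMap_eq]
          rw [hcc]
          exact (IntermediateField.adjoin K' _).algebraMap_mem _
        | add f g hf hg => rw [map_add]; exact add_mem hf hg
        | mul_X f i hf =>
          rw [map_mul]
          exact mul_mem hf (IntermediateField.subset_adjoin _ _ (hroot i))
      exact hle hx
  -- conclude
  let e2 : (Stmt8.L K n) ≃ₐ[K'] p.SplittingField := Polynomial.IsSplittingField.algEquiv _ p
  have hfr2 : Module.finrank K' p.SplittingField = Nat.factorial n := by
    rw [← hfr]
    exact (e2.toLinearEquiv.finrank_eq).symm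
  rw [Polynomial.Gal.card_of_separable hsep, hfr2]
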